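/- arXiv:math/0305389 — 3 statements merged into one kernel-verified Lean document; each statement's English description precedes it below -/
import Mathlib

section
/- For the powers of the Poisson kernel on the unit disc, the normalizing integral satisfies the asymptotics: for l > 0 there exist constants c1, c2 > 0 such that for all z with |z| < 1, c1 (1-|z|)^{1/2 - l} ≤ ∫_{-π}^{π} (p(z,θ))^{l+1/2} dθ ≤ c2 (1-|z|)^{1/2 - l}, where p(z,θ) = (1/2π)(1-|z|²)/|z - e^{iθ}|². -/
open Real Complex MeasureTheory

/-- Poisson kernel on the unit disc. -/
noncomputable def poissonKer (z : ℂ) (θ : ℝ) : ℝ :=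
  (1 / (2 * Real.pi)) * (1 - ‖z‖ ^ 2) / ‖z - Complex.exp (θ * Complex.I)‖ ^ 2


lemma one_sub_cos_le_sq (θ : ℝ) : 1 - Real.cos θ ≤ θ ^ 2 / 2 := by
  have h1 := Real.cos_two_mul (θ / 2)
  have h2 := Real.sin_sq_add_cos_sq (θ / 2)
  have h3 : Real.sin (θ / 2) ^ 2 ≤ (θ / 2) ^ 2 := Real.sin_sq_le_sq
  rw [show 2 * (θ / 2) = θ by ring] at h1
  nlinarith

lemma one_sub_cos_eq (θ : ℝ) : 1 - Real.cos θ = 2 * Real.sin (θ / 2) ^ 2 := by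
  have h1 := Real.cos_two_mul (θ / 2)
  have h2 := Real.sin_sq_add_cos_sq (θ / 2)
  rw [show 2 * (θ / 2) = θ by ring] at h1
  linarith

lemma sq_le_one_sub_cos {θ : ℝ} (h1 : -π ≤ θ) (h2 : θ ≤ π) :
    2 * θ ^ 2 / π ^ 2 ≤ 1 - Real.cos θ := by
  have hπ := Real.pi_pos
  have key : ∀ t : ℝ, 0 ≤ t → t ≤ π → t ^ 2 / π ^ 2 ≤ Real.sin (t / 2) ^ 2 := by
    intro t ht ht'
    have hs : t / π ≤ Real.sin (t / 2) := by
      have := Real.mul_le_sin (x := t / 2) (by linarith) (by linarith)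
      calc t / π = 2 / π * (t / 2) := by field_simp
        _ ≤ Real.sin (t / 2) := this
    have h0 : (0:ℝ) ≤ t / π := by positivity
    calc t ^ 2 / π ^ 2 = (t / π) ^ 2 := by field_simp
      _ ≤ Real.sin (t / 2) ^ 2 := by nlinarith
  rw [one_sub_cos_eq]
  rw [show 2 * θ ^ 2 / π ^ 2 = 2 * (θ ^ 2 / π ^ 2) by ring]
  rcases le_or_gt 0 θ with h | h
  · have := key θ h h2; linarith
  · have := key (-θ) (by linarith) (by linarith)
    have hsin : Real.sin (-θ / 2) ^ 2 = Real.sin (θ / 2) ^ 2 := by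
      rw [show -θ / 2 = -(θ / 2) by ring, Real.sin_neg]; ring
    rw [hsin, neg_pow] at this
    simp at this
    linarith


lemma Dpos {r : ℝ} (hr0 : 0 ≤ r) (hr1 : r < 1) (θ : ℝ) :
    (0:ℝ) < (1 - r) ^ 2 + 2 * r * (1 - Real.cos θ) := by
  have h1 : Real.cos θ ≤ 1 := Real.cos_le_one θ
  nlinarith

lemma Faux_cont (l : ℝ) (hl : 0 < l) {r : ℝ} (hr0 : 0 ≤ r) (hr1 : r < 1) :
    Continuous (fun θ => (1 / (2 * π) * (1 - r ^ 2) /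
      ((1 - r) ^ 2 + 2 * r * (1 - Real.cos θ))) ^ (l + 1 / 2 : ℝ)) := by
  have hc : Continuous fun θ : ℝ => 1 / (2 * π) * (1 - r ^ 2) /
      ((1 - r) ^ 2 + 2 * r * (1 - Real.cos θ)) := by
    apply Continuous.div continuous_const (by continuity)
    exact fun θ => (Dpos hr0 hr1 θ).ne'
  exact hc.rpow_const (fun θ => Or.inr (by positivity))

lemma lower_bound (l : ℝ) (hl : 0 < l) {r : ℝ} (hr0 : 0 ≤ r) (hr1 : r < 1) :
    (1 / (4 * π)) ^ (l + 1/2 : ℝ) * (1 - r) ^ ((1:ℝ)/2 - l) ≤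
      ∫ θ in (-π)..π, (1 / (2 * π) * (1 - r ^ 2) /
        ((1 - r) ^ 2 + 2 * r * (1 - Real.cos θ))) ^ (l + 1 / 2 : ℝ) := by
  have hπ := Real.pi_pos
  have hπ3 := Real.pi_gt_three
  set s : ℝ := l + 1/2 with hs
  set δ : ℝ := 1 - r with hδ'
  have hδ : 0 < δ := by simp [hδ']; linarith
  have hδ1 : δ ≤ 1 := by simp [hδ']; linarith
  set F : ℝ → ℝ := fun θ => (1 / (2 * π) * (1 - r ^ 2) /
      ((1 - r) ^ 2 + 2 * r * (1 - Real.cos θ))) ^ s with hF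
  have hFc : Continuous F := Faux_cont l hl hr0 hr1
  have hFnn : ∀ θ, 0 ≤ F θ := by
    intro θ
    apply Real.rpow_nonneg
    have := Dpos hr0 hr1 θ
    have : (0:ℝ) ≤ 1 - r ^ 2 := by nlinarith
    positivity
  -- pointwise lower bound on [0, δ]
  have hpt : ∀ θ ∈ Set.Icc (0:ℝ) δ, (1 / (4 * π * δ)) ^ s ≤ F θ := by
    intro θ hθ
    obtain ⟨hθ0, hθδ⟩ := hθ
    have hD := Dpos hr0 hr1 θ
    have hcos : 1 - Real.cos θ ≤ θ ^ 2 / 2 := one_sub_cos_le_sq θ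
    have hcos0 : 0 ≤ 1 - Real.cos θ := by have := Real.cos_le_one θ; linarith
    have hDle : (1 - r) ^ 2 + 2 * r * (1 - Real.cos θ) ≤ 2 * δ ^ 2 := by
      have : θ ^ 2 ≤ δ ^ 2 := by nlinarith
      nlinarith
    have hnum : δ ≤ 1 - r ^ 2 := by nlinarith
    have hbase : 1 / (4 * π * δ) ≤ 1 / (2 * π) * (1 - r ^ 2) /
        ((1 - r) ^ 2 + 2 * r * (1 - Real.cos θ)) := by
      rw [show (1:ℝ) / (4 * π * δ) = 1 / (2 * π) * δ / (2 * δ ^ 2) by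
        field_simp; ring]
      have h0 : (0:ℝ) ≤ 1 - r ^ 2 := by nlinarith
      gcongr <;> first | positivity | linarith
    exact Real.rpow_le_rpow (by positivity) hbase (by positivity)
  -- split integral
  have hint : ∀ a b : ℝ, IntervalIntegrable F volume a b :=
    fun a b => hFc.intervalIntegrable a b
  have hδπ : δ ≤ π := by linarith
  have e2 := intervalIntegral.integral_add_adjacent_intervals (hint 0 δ) (hint δ π)
  have e1 := intervalIntegral.integral_add_adjacent_intervals (hint (-π) 0) (hint 0 π)
  have hn1 : 0 ≤ ∫ θ in (-π)..(0:ℝ), F θ :=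
    intervalIntegral.integral_nonneg (by linarith) (fun u _ => hFnn u)
  have hn2 : 0 ≤ ∫ θ in δ..π, F θ :=
    intervalIntegral.integral_nonneg hδπ (fun u _ => hFnn u)
  have hmid : δ * (1 / (4 * π * δ)) ^ s ≤ ∫ θ in (0:ℝ)..δ, F θ := by
    have := intervalIntegral.integral_mono_on (a := 0) (b := δ) hδ.le
      (intervalIntegrable_const) (hint 0 δ) hpt
    rwa [intervalIntegral.integral_const, sub_zero, smul_eq_mul] at this
  have harith : δ * (1 / (4 * π * δ)) ^ s = (1 / (4 * π)) ^ s * δ ^ ((1:ℝ)/2 - l) := by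
    rw [show (1:ℝ)/2 - l = 1 - s by rw [hs]; ring,
      show (1:ℝ)/(4*π*δ) = (1/(4*π)) * δ⁻¹ from by field_simp,
      Real.mul_rpow (by positivity) (by positivity), Real.inv_rpow hδ.le,
      Real.rpow_sub hδ, Real.rpow_one]
    field_simp
  calc (1 / (4 * π)) ^ s * δ ^ ((1:ℝ)/2 - l) = δ * (1 / (4 * π * δ)) ^ s := harith.symm
    _ ≤ ∫ θ in (0:ℝ)..δ, F θ := hmid
    _ ≤ (∫ θ in (0:ℝ)..δ, F θ) + ∫ θ in δ..π, F θ := by linarith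
    _ = ∫ θ in (0:ℝ)..π, F θ := e2
    _ ≤ (∫ θ in (-π)..(0:ℝ), F θ) + ∫ θ in (0:ℝ)..π, F θ := by linarith
    _ = ∫ θ in (-π)..π, F θ := e1

set_option maxHeartbeats 1000000 in
lemma upper_bound (l : ℝ) (hl : 0 < l) {r : ℝ} (hr0 : 0 ≤ r) (hr1 : r < 1) :
    (∫ θ in (-π)..π, (1 / (2 * π) * (1 - r ^ 2) /
        ((1 - r) ^ 2 + 2 * r * (1 - Real.cos θ))) ^ (l + 1 / 2 : ℝ)) ≤
      ((20 / π) ^ (l + 1/2 : ℝ) * (2 + 1 / l)) * (1 - r) ^ ((1:ℝ)/2 - l) := by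
  have hπ := Real.pi_pos
  have hπ3 := Real.pi_gt_three
  have hπ4 := Real.pi_lt_d2
  set s : ℝ := l + 1/2 with hs
  have hs0 : (0:ℝ) < s := by rw [hs]; linarith
  set δ : ℝ := 1 - r with hδ'
  have hδ : 0 < δ := by simp [hδ']; linarith
  have hδ1 : δ ≤ 1 := by simp [hδ']; linarith
  have hδπ : δ ≤ π := by linarith
  set F : ℝ → ℝ := fun θ => (1 / (2 * π) * (1 - r ^ 2) /
      ((1 - r) ^ 2 + 2 * r * (1 - Real.cos θ))) ^ s with hF
  have hFc : Continuous F := Faux_cont l hl hr0 hr1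
  -- key denominator bound
  have hden : ∀ θ ∈ Set.Icc (-π) π, (δ ^ 2 + θ ^ 2) / 20 ≤
      (1 - r) ^ 2 + 2 * r * (1 - Real.cos θ) := by
    intro θ ⟨h1, h2⟩
    have hc := sq_le_one_sub_cos h1 h2
    have hc0 : 0 ≤ 1 - Real.cos θ := by have := Real.cos_le_one θ; linarith
    have hθπ : θ ^ 2 ≤ π ^ 2 := by nlinarith
    rcases le_or_gt (1/8 : ℝ) r with h | h
    · have hmono : 2 * r * (2 * θ ^ 2 / π ^ 2) ≤ 2 * r * (1 - Real.cos θ) :=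
        mul_le_mul_of_nonneg_left hc (by linarith)
      have hπsq : π ^ 2 < 10 := by nlinarith
      have hq : θ ^ 2 / 20 ≤ 2 * r * (2 * θ ^ 2 / π ^ 2) := by
        rw [show 2 * r * (2 * θ ^ 2 / π ^ 2) = (80 * r * θ ^ 2) / π ^ 2 / 20 by ring]
        apply div_le_div_of_nonneg_right _ (by norm_num)
        rw [le_div_iff₀ (by positivity)]
        nlinarith [sq_nonneg θ]
      nlinarith [sq_nonneg (1 - r)]
    · have hδbig : δ ≥ 7/8 := by simp [hδ']; linarith
      have : 2 * r * (1 - Real.cos θ) ≥ 0 := by positivity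
      nlinarith
  -- H: the majorant
  set H : ℝ → ℝ := fun θ => (20 / π * δ) ^ s * (δ ^ 2 + θ ^ 2) ^ (-s) with hH
  have hGc : Continuous fun θ : ℝ => (δ ^ 2 + θ ^ 2) ^ (-s) := by
    apply Continuous.rpow_const (by continuity)
    intro θ; left; positivity
  have hHc : Continuous H := continuous_const.mul hGc
  have hpt : ∀ θ ∈ Set.Icc (-π) π, F θ ≤ H θ := by
    intro θ hθ
    have hD := Dpos hr0 hr1 θ
    have hDlow := hden θ hθ
    have hnum : 1 - r ^ 2 ≤ 2 * δ := by simp only [hδ']; nlinarith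
    have h0 : (0:ℝ) ≤ 1 - r ^ 2 := by nlinarith
    have hbase : 1 / (2 * π) * (1 - r ^ 2) /
        ((1 - r) ^ 2 + 2 * r * (1 - Real.cos θ)) ≤ 20 / π * δ * ((δ ^ 2 + θ ^ 2)⁻¹) := by
      have hstep : 1 / (2 * π) * (1 - r ^ 2) /
          ((1 - r) ^ 2 + 2 * r * (1 - Real.cos θ)) ≤
          1 / (2 * π) * (2 * δ) / ((δ ^ 2 + θ ^ 2) / 20) := by
        gcongr <;> first | positivity | linarith
      calc _ ≤ 1 / (2 * π) * (2 * δ) / ((δ ^ 2 + θ ^ 2) / 20) := hstep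
        _ = 20 / π * δ * ((δ ^ 2 + θ ^ 2)⁻¹) := by
            have hne : (δ ^ 2 + θ ^ 2 : ℝ) ≠ 0 := by positivity
            field_simp
    calc F θ ≤ (20 / π * δ * ((δ ^ 2 + θ ^ 2)⁻¹)) ^ s := by
          apply Real.rpow_le_rpow _ hbase hs0.le
          positivity
      _ = H θ := by
          rw [Real.mul_rpow (by positivity) (by positivity),
            Real.inv_rpow (by positivity), ← Real.rpow_neg (by positivity)]
  -- compare with H
  have hint : ∀ a b : ℝ, IntervalIntegrable F volume a b :=
    fun a b => hFc.intervalIntegrable a b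
  have hintH : ∀ a b : ℝ, IntervalIntegrable H volume a b :=
    fun a b => hHc.intervalIntegrable a b
  have hIH : (∫ θ in (-π)..π, F θ) ≤ ∫ θ in (-π)..π, H θ := by
    apply intervalIntegral.integral_mono_on (by linarith) (hint _ _) (hintH _ _)
    intro x hx; exact hpt x hx
  -- compute/bound ∫ H
  set G : ℝ → ℝ := fun θ => (δ ^ 2 + θ ^ 2) ^ (-s) with hG
  have hintG : ∀ a b : ℝ, IntervalIntegrable G volume a b :=
    fun a b => hGc.intervalIntegrable a b
  have hHsplit : (∫ θ in (-π)..π, H θ) = (20 / π * δ) ^ s * ∫ θ in (-π)..π, G θ := by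
    rw [← intervalIntegral.integral_const_mul]
  -- bound ∫ G
  have hGsplit : (∫ θ in (-π)..π, G θ) =
      (∫ θ in (-π)..(-δ), G θ) + ((∫ θ in (-δ)..δ, G θ) + ∫ θ in δ..π, G θ) := by
    rw [intervalIntegral.integral_add_adjacent_intervals (hintG (-δ) δ) (hintG δ π),
      intervalIntegral.integral_add_adjacent_intervals (hintG (-π) (-δ)) (hintG (-δ) π)]
  have hGeven : ∀ θ : ℝ, G (-θ) = G θ := by intro θ; simp [hG]
  have hflip : (∫ θ in (-π)..(-δ), G θ) = ∫ θ in δ..π, G θ := by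
    rw [← intervalIntegral.integral_comp_neg (a := δ) (b := π) G]
    congr 1; funext θ; exact hGeven θ
  -- middle piece
  have hmid : (∫ θ in (-δ)..δ, G θ) ≤ 2 * δ ^ (1 - 2*s) := by
    have hptm : ∀ θ ∈ Set.Icc (-δ) δ, G θ ≤ δ ^ (-(2*s)) := by
      intro θ _
      have h1 : (δ ^ 2 : ℝ) ^ (-s) = δ ^ (-(2*s)) := by
        rw [← Real.rpow_natCast δ 2, ← Real.rpow_mul hδ.le]
        norm_num
      rw [hG, ← h1]
      exact Real.rpow_le_rpow_of_nonpos (by positivity) (by nlinarith [sq_nonneg θ])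
        (by linarith)
    have := intervalIntegral.integral_mono_on (a := -δ) (b := δ) (by linarith)
      (hintG _ _) intervalIntegrable_const hptm
    rw [intervalIntegral.integral_const, smul_eq_mul] at this
    calc (∫ θ in (-δ)..δ, G θ) ≤ (δ - -δ) * δ ^ (-(2*s)) := this
      _ = 2 * (δ * δ ^ (-(2*s))) := by ring
      _ = 2 * δ ^ (1 - 2*s) := by
          rw [show (1 : ℝ) - 2*s = 1 + -(2*s) by ring, Real.rpow_add hδ, Real.rpow_one]
  -- right piece
  have hright : (∫ θ in δ..π, G θ) ≤ δ ^ (1 - 2*s) / (2 * l) := by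
    have hptr : ∀ θ ∈ Set.Icc δ π, G θ ≤ θ ^ (-(2*s)) := by
      intro θ ⟨h1, _⟩
      have hθ0 : 0 < θ := lt_of_lt_of_le hδ h1
      have h1' : (θ ^ 2 : ℝ) ^ (-s) = θ ^ (-(2*s)) := by
        rw [← Real.rpow_natCast θ 2, ← Real.rpow_mul hθ0.le]
        norm_num
      rw [hG, ← h1']
      exact Real.rpow_le_rpow_of_nonpos (by positivity) (by nlinarith) (by linarith)
    have hcont : ContinuousOn (fun θ : ℝ => θ ^ (-(2*s))) (Set.uIcc δ π) := by
      intro x hx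
      have hx0 : x ≠ 0 := by
        rw [Set.uIcc_of_le hδπ] at hx
        exact (lt_of_lt_of_le hδ hx.1).ne'
      exact (Real.continuousAt_rpow_const x _ (Or.inl hx0)).continuousWithinAt
    have hIr : IntervalIntegrable (fun θ : ℝ => θ ^ (-(2*s))) volume δ π :=
      hcont.intervalIntegrable
    have := intervalIntegral.integral_mono_on (a := δ) (b := π) hδπ
      (hintG _ _) hIr hptr
    have hval : (∫ θ in δ..π, (θ : ℝ) ^ (-(2*s))) =
        (π ^ (-(2*s) + 1) - δ ^ (-(2*s) + 1)) / (-(2*s) + 1) := by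
      apply integral_rpow
      right
      constructor
      · intro hcontra
        have : (2 : ℝ) * s = 1 := by linarith [neg_eq_iff_eq_neg.mp hcontra]
        rw [hs] at this; linarith
      · rw [Set.uIcc_of_le hδπ]
        intro hmem
        exact absurd hmem.1 (by linarith)
    have hπpow : 0 < π ^ (-(2*s) + 1) := Real.rpow_pos_of_pos hπ _
    have hexp : -(2*s) + 1 = -(2*l) := by rw [hs]; ring
    calc (∫ θ in δ..π, G θ) ≤ ∫ θ in δ..π, (θ : ℝ) ^ (-(2*s)) := this
      _ = (π ^ (-(2*s) + 1) - δ ^ (-(2*s) + 1)) / (-(2*s) + 1) := hval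
      _ ≤ δ ^ (1 - 2*s) / (2 * l) := by
          have hπpow2 : 0 < π ^ (-(2*l) : ℝ) := Real.rpow_pos_of_pos hπ _
          rw [hexp, show (1:ℝ) - 2*s = -(2*l) by rw [hs]; ring,
            show (π ^ (-(2*l) : ℝ) - δ ^ (-(2*l) : ℝ)) / (-(2*l))
              = (δ ^ (-(2*l) : ℝ) - π ^ (-(2*l) : ℝ)) / (2*l) by ring]
          gcongr
          linarith
  -- assemble
  have h2l : 0 < 2 + 1/l := by have := one_div_pos.mpr hl; linarith
  have hGtot : (∫ θ in (-π)..π, G θ) ≤ (2 + 1/l) * δ ^ (1 - 2*s) := by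
    rw [hGsplit, hflip]
    have e1 : δ ^ (1 - 2*s) / (2*l) + δ ^ (1 - 2*s) / (2*l) = δ ^ (1 - 2*s) / l := by
      ring
    have e2 : (2 + 1/l) * δ ^ (1 - 2*s) = 2 * δ ^ (1 - 2*s) + δ ^ (1 - 2*s) / l := by
      ring
    linarith
  have hpow : δ ^ s * δ ^ (1 - 2*s) = δ ^ ((1:ℝ)/2 - l) := by
    rw [← Real.rpow_add hδ]; congr 1; rw [hs]; ring
  have hfinal : (20 / π * δ) ^ s * ((2 + 1/l) * δ ^ (1 - 2*s)) =
      ((20/π) ^ s * (2 + 1/l)) * δ ^ ((1:ℝ)/2 - l) := by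
    rw [Real.mul_rpow (by positivity) hδ.le,
      show (20/π) ^ s * δ ^ s * ((2 + 1/l) * δ ^ (1 - 2*s))
        = ((20/π) ^ s * (2 + 1/l)) * (δ ^ s * δ ^ (1 - 2*s)) by ring, hpow]
  calc (∫ θ in (-π)..π, F θ) ≤ ∫ θ in (-π)..π, H θ := hIH
    _ = (20 / π * δ) ^ s * ∫ θ in (-π)..π, G θ := hHsplit
    _ ≤ (20 / π * δ) ^ s * ((2 + 1/l) * δ ^ (1 - 2*s)) := by
        apply mul_le_mul_of_nonneg_left hGtot (by positivity)
    _ = ((20/π) ^ s * (2 + 1/l)) * δ ^ ((1:ℝ)/2 - l) := hfinal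

/-- For `l > 0`, the normalizing integral of the `(l+1/2)`-power of the Poisson kernel
satisfies `P_l 1 (z) ≍ (1-|z|)^(1/2 - l)`. -/
theorem power_poisson_normalization_asymptotics (l : ℝ) (hl : 0 < l) :
    ∃ c₁ c₂ : ℝ, 0 < c₁ ∧ 0 < c₂ ∧ ∀ z : ℂ, ‖z‖ < 1 →
      c₁ * (1 - ‖z‖) ^ ((1 : ℝ) / 2 - l) ≤
        (∫ θ in (-Real.pi)..Real.pi, (poissonKer z θ) ^ (l + 1 / 2 : ℝ)) ∧
      (∫ θ in (-Real.pi)..Real.pi, (poissonKer z θ) ^ (l + 1 / 2 : ℝ)) ≤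
        c₂ * (1 - ‖z‖) ^ ((1 : ℝ) / 2 - l) := by
  have hπ := Real.pi_pos
  refine ⟨(1 / (4 * π)) ^ (l + 1/2 : ℝ), (20 / π) ^ (l + 1/2 : ℝ) * (2 + 1 / l),
    by positivity, ?_, ?_⟩
  · have h1 : (0:ℝ) < 1 / l := one_div_pos.mpr hl
    have h2 : (0:ℝ) < (20 / π) ^ (l + 1/2 : ℝ) := by positivity
    nlinarith
  intro z hz
  set r : ℝ := ‖z‖ with hr
  set φ : ℝ := Complex.arg z with hφ
  have hr0 : 0 ≤ r := norm_nonneg z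
  have habs : ∀ θ : ℝ, ‖z - Complex.exp (θ * Complex.I)‖ ^ 2
      = (1 - r) ^ 2 + 2 * r * (1 - Real.cos (θ - φ)) := by
    intro θ
    conv_lhs => rw [← Complex.norm_mul_exp_arg_mul_I z]
    rw [Complex.sq_norm]
    have h1 : ((‖z‖ : ℂ) * Complex.exp (Complex.arg z * Complex.I)
        - Complex.exp (θ * Complex.I))
        = Complex.ofReal (r * Real.cos φ - Real.cos θ)
          + Complex.ofReal (r * Real.sin φ - Real.sin θ) * Complex.I := by
      rw [Complex.exp_mul_I, Complex.exp_mul_I, ← Complex.ofReal_cos,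
        ← Complex.ofReal_sin, ← Complex.ofReal_cos, ← Complex.ofReal_sin]
      push_cast
      ring
    rw [h1, Complex.normSq_add_mul_I, Real.cos_sub]
    nlinarith [Real.sin_sq_add_cos_sq φ, Real.sin_sq_add_cos_sq θ]
  have hpk : ∀ θ : ℝ, poissonKer z θ ^ (l + 1 / 2 : ℝ)
      = (1 / (2 * π) * (1 - r ^ 2) /
          ((1 - r) ^ 2 + 2 * r * (1 - Real.cos (θ - φ)))) ^ (l + 1 / 2 : ℝ) := by
    intro θ
    rw [poissonKer, habs θ]
  have hper : Function.Periodic (fun t : ℝ => (1 / (2 * π) * (1 - r ^ 2) /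
      ((1 - r) ^ 2 + 2 * r * (1 - Real.cos t))) ^ (l + 1 / 2 : ℝ)) (2 * π) := by
    intro x
    simp [Real.cos_add_two_pi]
  have hrot : (∫ θ in (-π)..π, poissonKer z θ ^ (l + 1 / 2 : ℝ))
      = ∫ θ in (-π)..π, (1 / (2 * π) * (1 - r ^ 2) /
          ((1 - r) ^ 2 + 2 * r * (1 - Real.cos θ))) ^ (l + 1 / 2 : ℝ) := by
    simp only [hpk]
    rw [intervalIntegral.integral_comp_sub_right (fun t : ℝ => (1 / (2 * π) * (1 - r ^ 2) /
      ((1 - r) ^ 2 + 2 * r * (1 - Real.cos t))) ^ (l + 1 / 2 : ℝ)) φ]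
    have := hper.intervalIntegral_add_eq (-π - φ) (-π)
    rw [show -π - φ + 2 * π = π - φ by ring, show -π + 2 * π = π by ring] at this
    exact this
  rw [hrot]
  exact ⟨lower_bound l hl hr0 hz, upper_bound l hl hr0 hz⟩
end

section
/- For the square root of the Poisson kernel on the unit disc, there exist constants c1, c2 > 0 such that for all z with 0 < |z| < 1, c1 (1-|z|)^{1/2} log(2/(1-|z|)) ≤ ∫_{-π}^{π} (p(z,θ))^{1/2} dθ ≤ c2 (1-|z|)^{1/2} log(2/(1-|z|)), where p(z,θ) = (1/2π)(1-|z|²)/|z-e^{iθ}|². -/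
open Real Complex MeasureTheory

lemma pk_sq_abs (r u : ℝ) :
    (‖(r : ℂ) - Complex.exp (u * Complex.I)‖) ^ 2
      = (1 - r) ^ 2 + 2 * r * (1 - Real.cos u) := by
  rw [Complex.sq_norm, Complex.normSq_apply]
  simp [Complex.sub_re, Complex.sub_im, Complex.exp_ofReal_mul_I_re, Complex.exp_ofReal_mul_I_im]
  nlinarith [Real.sin_sq_add_cos_sq u]

lemma pk_one_sub_le (w : ℂ) (u : ℝ) :
    1 - ‖w‖ ≤ ‖w - Complex.exp (u * Complex.I)‖ := by
  have h := norm_sub_norm_le (Complex.exp (u * Complex.I)) w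
  rw [Complex.norm_exp_ofReal_mul_I] at h
  rw [norm_sub_rev] at h
  linarith

lemma pk_upper {r : ℝ} (hr0 : 0 ≤ r) (hr1 : r ≤ 1) {u : ℝ} (hu : 0 ≤ u) :
    ‖(r : ℂ) - Complex.exp (u * Complex.I)‖ ≤ (1 - r) + u := by
  have h0 := norm_nonneg ((r : ℂ) - Complex.exp (u * Complex.I))
  have hs := pk_sq_abs r u
  have hc : 1 - u ^ 2 / 2 ≤ Real.cos u := Real.one_sub_sq_div_two_le_cos
  nlinarith

lemma pk_lower {r : ℝ} (hr0 : 0 ≤ r) (hr1 : r < 1) {u : ℝ} (hu0 : 0 ≤ u) (hu1 : u ≤ π) :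
    ((1 - r) + u) / 9 ≤ ‖(r : ℂ) - Complex.exp (u * Complex.I)‖ := by
  have h0 := norm_nonneg ((r : ℂ) - Complex.exp (u * Complex.I))
  have hs := pk_sq_abs r u
  have hπ : π < 3.15 := Real.pi_lt_d2
  have hπ3 : 3 < π := Real.pi_gt_three
  rcases le_or_gt r (1/2) with h | h
  · have h1 := pk_one_sub_le (r : ℂ) u
    rw [Complex.norm_real, Real.norm_eq_abs, _root_.abs_of_nonneg hr0] at h1
    linarith
  · have hc : Real.cos u ≤ 1 - 2 / π ^ 2 * u ^ 2 :=
      Real.cos_le_one_sub_mul_cos_sq (by rwa [_root_.abs_of_nonneg hu0])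
    have hπsq : π ^ 2 < 10 := by nlinarith
    have h15 : (1:ℝ)/5 ≤ 2/π^2 := by
      rw [div_le_div_iff₀ (by norm_num) (by positivity)]
      nlinarith
    have hu2 : u ^ 2 / 5 ≤ 2 / π ^ 2 * u ^ 2 := by
      nlinarith [mul_le_mul_of_nonneg_right h15 (sq_nonneg u)]
    nlinarith [sq_nonneg ((1 - r) - u), sq_nonneg (‖(r : ℂ) - Complex.exp (u * Complex.I)‖ - ((1-r)+u)/9)]

lemma pk_even (r u : ℝ) :
    ‖(r : ℂ) - Complex.exp ((-u : ℝ) * Complex.I)‖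
      = ‖(r : ℂ) - Complex.exp (u * Complex.I)‖ := by
  have h1 := pk_sq_abs r (-u)
  have h2 := pk_sq_abs r u
  rw [Real.cos_neg] at h1
  have e1 := norm_nonneg ((r : ℂ) - Complex.exp ((-u : ℝ) * Complex.I))
  have e2 := norm_nonneg ((r : ℂ) - Complex.exp (u * Complex.I))
  nlinarith

lemma pk_periodic (r : ℝ) :
    Function.Periodic (fun u : ℝ => (‖(r : ℂ) - Complex.exp (u * Complex.I)‖)⁻¹)
      (2 * π) := by
  intro u
  have : Complex.exp (((u + 2 * π : ℝ)) * Complex.I) = Complex.exp (u * Complex.I) := by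
    push_cast
    rw [add_mul, Complex.exp_add, Complex.exp_two_pi_mul_I, mul_one]
  simp only [this]

lemma pk_cont {r : ℝ} (hr : r < 1) (hr0 : 0 ≤ r) :
    Continuous (fun u : ℝ => (‖(r : ℂ) - Complex.exp (u * Complex.I)‖)⁻¹) := by
  apply Continuous.inv₀
  · exact continuous_norm.comp (continuous_const.sub
      (Complex.continuous_exp.comp ((Complex.continuous_ofReal).mul continuous_const)))
  · intro u
    have h := pk_one_sub_le (r : ℂ) u
    rw [Complex.norm_real, Real.norm_eq_abs, _root_.abs_of_nonneg hr0] at h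
    have : (0:ℝ) < 1 - r := by linarith
    exact ne_of_gt (lt_of_lt_of_le this h)

lemma pk_integral_inv {δ : ℝ} (hδ : 0 < δ) :
    ∫ u in (0:ℝ)..π, (δ + u)⁻¹ = Real.log ((π + δ) / δ) := by
  have h := intervalIntegral.integral_comp_add_right (a := (0:ℝ)) (b := π)
    (fun x : ℝ => x⁻¹) δ
  simp only [zero_add] at h
  rw [show (fun u : ℝ => (δ + u)⁻¹) = (fun u : ℝ => (u + δ)⁻¹) from funext fun u => by rw [add_comm]]
  rw [h, integral_inv_of_pos hδ (by positivity)]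

lemma pk_J_eq {r : ℝ} (hr0 : 0 ≤ r) (hr1 : r < 1) :
    (∫ u in (-π)..π, (‖(r : ℂ) - Complex.exp (u * Complex.I)‖)⁻¹)
      = 2 * ∫ u in (0:ℝ)..π, (‖(r : ℂ) - Complex.exp (u * Complex.I)‖)⁻¹ := by
  have hcont := pk_cont hr1 hr0
  have h1 : (∫ u in (-π)..(0:ℝ), (‖(r : ℂ) - Complex.exp (u * Complex.I)‖)⁻¹)
      = ∫ u in (0:ℝ)..π, (‖(r : ℂ) - Complex.exp (u * Complex.I)‖)⁻¹ := by
    have h := intervalIntegral.integral_comp_neg (a := (0:ℝ)) (b := π)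
      (fun u : ℝ => (‖(r : ℂ) - Complex.exp (u * Complex.I)‖)⁻¹)
    simp only [neg_zero] at h
    rw [← h]
    apply intervalIntegral.integral_congr
    intro x _
    simp only
    rw [show ((-x : ℝ) : ℂ) = ((-x : ℝ) : ℂ) from rfl]
    exact congrArg Inv.inv (pk_even r x)
  have h2 := intervalIntegral.integral_add_adjacent_intervals
    (hcont.intervalIntegrable (μ := volume) (-π) 0) (hcont.intervalIntegrable (μ := volume) 0 π)
  rw [← h2, h1]; ring

lemma pk_K_bounds {r : ℝ} (hr0 : 0 ≤ r) (hr1 : r < 1) :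
    Real.log (2 / (1 - r)) ≤
        (∫ u in (0:ℝ)..π, (‖(r : ℂ) - Complex.exp (u * Complex.I)‖)⁻¹) ∧
      (∫ u in (0:ℝ)..π, (‖(r : ℂ) - Complex.exp (u * Complex.I)‖)⁻¹)
        ≤ 36 * Real.log (2 / (1 - r)) := by
  have hδ0 : (0:ℝ) < 1 - r := by linarith
  have hBpos : ∀ u : ℝ, 0 < ‖(r : ℂ) - Complex.exp (u * Complex.I)‖ := by
    intro u
    have h := pk_one_sub_le (r : ℂ) u
    rw [Complex.norm_real, Real.norm_eq_abs, _root_.abs_of_nonneg hr0] at h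
    linarith
  have hintg := (pk_cont hr1 hr0).intervalIntegrable (μ := volume) (0:ℝ) π
  have hcont1 : ContinuousOn (fun u : ℝ => (1 - r + u)⁻¹) (Set.uIcc 0 π) := by
    apply ContinuousOn.inv₀ (Continuous.continuousOn (by continuity))
    intro x hx
    rw [Set.uIcc_of_le Real.pi_pos.le] at hx
    have := hx.1
    exact ne_of_gt (by linarith)
  have hint1 := hcont1.intervalIntegrable (μ := volume)
  have hlow : (∫ u in (0:ℝ)..π, (1 - r + u)⁻¹)
      ≤ ∫ u in (0:ℝ)..π, (‖(r : ℂ) - Complex.exp (u * Complex.I)‖)⁻¹ := by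
    apply intervalIntegral.integral_mono_on Real.pi_pos.le hint1 hintg
    intro u hu
    exact inv_anti₀ (hBpos u) (pk_upper hr0 hr1.le hu.1)
  have hup : (∫ u in (0:ℝ)..π, (‖(r : ℂ) - Complex.exp (u * Complex.I)‖)⁻¹)
      ≤ ∫ u in (0:ℝ)..π, 9 * (1 - r + u)⁻¹ := by
    apply intervalIntegral.integral_mono_on Real.pi_pos.le hintg (hint1.const_mul 9)
    intro u hu
    have h := pk_lower hr0 hr1 hu.1 hu.2
    have h2 := inv_anti₀ (show (0:ℝ) < (1 - r + u)/9 by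
      have := hu.1; positivity) h
    rw [inv_div, div_eq_mul_inv] at h2
    exact h2
  have hcomp : (∫ u in (0:ℝ)..π, 9 * (1 - r + u)⁻¹)
      = 9 * Real.log ((π + (1 - r)) / (1 - r)) := by
    rw [intervalIntegral.integral_const_mul, pk_integral_inv hδ0]
  have hloglow : Real.log (2 / (1 - r)) ≤ Real.log ((π + (1 - r)) / (1 - r)) := by
    apply Real.log_le_log (by positivity)
    gcongr
    linarith [Real.pi_gt_three]
  have hlogup : Real.log ((π + (1 - r)) / (1 - r)) ≤ 4 * Real.log (2 / (1 - r)) := by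
    have hδ3 : (1 - r) ^ 3 ≤ 1 := pow_le_one₀ (by linarith) (by linarith)
    have hδ4 : (1 - r) ^ 4 ≤ 1 - r := by nlinarith [mul_nonneg hδ0.le (sub_nonneg.mpr hδ3)]
    have h16 : (π + (1 - r)) / (1 - r) ≤ (2 / (1 - r)) ^ 4 := by
      rw [div_pow, div_le_div_iff₀ hδ0 (by positivity)]
      have h5 : π + (1 - r) ≤ (5:ℝ) := by nlinarith [Real.pi_lt_d2]
      nlinarith [mul_le_mul_of_nonneg_right h5 (pow_nonneg hδ0.le 4), hδ4]
    calc Real.log ((π + (1 - r)) / (1 - r)) ≤ Real.log ((2 / (1 - r)) ^ 4) :=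
          Real.log_le_log (by positivity) h16
      _ = 4 * Real.log (2 / (1 - r)) := by rw [Real.log_pow]; norm_num
  constructor
  · calc Real.log (2 / (1 - r)) ≤ Real.log ((π + (1 - r)) / (1 - r)) := hloglow
      _ = ∫ u in (0:ℝ)..π, (1 - r + u)⁻¹ := (pk_integral_inv hδ0).symm
      _ ≤ _ := hlow
  · calc (∫ u in (0:ℝ)..π, (‖(r : ℂ) - Complex.exp (u * Complex.I)‖)⁻¹)
        ≤ ∫ u in (0:ℝ)..π, 9 * (1 - r + u)⁻¹ := hup
      _ = 9 * Real.log ((π + (1 - r)) / (1 - r)) := hcomp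
      _ ≤ 9 * (4 * Real.log (2 / (1 - r))) := by
          apply mul_le_mul_of_nonneg_left hlogup (by norm_num)
      _ = 36 * Real.log (2 / (1 - r)) := by ring

lemma pk_rotate (z : ℂ) (θ : ℝ) :
    ‖z - Complex.exp (θ * Complex.I)‖
      = ‖(‖z‖ : ℂ) - Complex.exp (((θ - Complex.arg z : ℝ)) * Complex.I)‖ := by
  conv_lhs => rw [← Complex.norm_mul_exp_arg_mul_I z]
  have h : ((‖z‖ : ℂ) * Complex.exp (↑(Complex.arg z) * Complex.I)
        - Complex.exp (↑θ * Complex.I))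
      = Complex.exp (↑(Complex.arg z) * Complex.I)
        * ((‖z‖ : ℂ) - Complex.exp (((θ - Complex.arg z : ℝ)) * Complex.I)) := by
    rw [mul_sub, ← Complex.exp_add]
    have e : ((Complex.arg z : ℂ) * Complex.I + ((θ - Complex.arg z : ℝ) : ℂ) * Complex.I)
        = (θ : ℂ) * Complex.I := by push_cast; ring
    rw [e]; ring
  rw [h, norm_mul, Complex.norm_exp_ofReal_mul_I, one_mul]

lemma pk_shift (r φ : ℝ) :
    (∫ θ in (-π)..π, (‖(r : ℂ) - Complex.exp (((θ - φ : ℝ)) * Complex.I)‖)⁻¹)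
      = ∫ u in (-π)..π, (‖(r : ℂ) - Complex.exp (u * Complex.I)‖)⁻¹ := by
  have h := intervalIntegral.integral_comp_sub_right (a := -π) (b := π)
    (fun u : ℝ => (‖(r : ℂ) - Complex.exp (u * Complex.I)‖)⁻¹) φ
  rw [h]
  have h2 := (pk_periodic r).intervalIntegral_add_eq (-π - φ) (-π)
  rw [show -π - φ + 2*π = π - φ by ring, show -π + 2*π = π by ring] at h2
  exact h2


/-- The normalizing integral for the square root of the Poisson kernel satisfies
`P₀1(z) ≍ (1-|z|)^(1/2) log(2/(1-|z|))` (log base 2). -/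
theorem sqrt_poisson_normalization_asymptotics :
    ∃ c₁ c₂ : ℝ, 0 < c₁ ∧ 0 < c₂ ∧ ∀ z : ℂ, 0 < ‖z‖ → ‖z‖ < 1 →
      c₁ * (1 - ‖z‖) ^ ((1 : ℝ) / 2) * Real.logb 2 (2 / (1 - ‖z‖)) ≤
        (∫ θ in (-Real.pi)..Real.pi, (poissonKer z θ) ^ ((1 : ℝ) / 2)) ∧
      (∫ θ in (-Real.pi)..Real.pi, (poissonKer z θ) ^ ((1 : ℝ) / 2)) ≤
        c₂ * (1 - ‖z‖) ^ ((1 : ℝ) / 2) * Real.logb 2 (2 / (1 - ‖z‖)) := by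
  have hlog2 : (0:ℝ) < Real.log 2 := Real.log_pos one_lt_two
  refine ⟨Real.log 2 / 2, 72 * Real.log 2, by linarith, by linarith, ?_⟩
  intro z hz0 hz1
  set r := ‖z‖ with hrdef
  have hr0 : (0:ℝ) ≤ r := hz0.le
  have hδ0 : (0:ℝ) < 1 - r := by linarith
  set S := Real.sqrt ((1 - r^2)/(2*π)) with hSdef
  -- pointwise formula for the integrand
  have e1 : ∀ θ : ℝ, poissonKer z θ ^ ((1:ℝ)/2)
      = S * (‖z - Complex.exp (θ * Complex.I)‖)⁻¹ := by
    intro θ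
    have hB0 : 0 < ‖z - Complex.exp (θ * Complex.I)‖ :=
      lt_of_lt_of_le hδ0 (pk_one_sub_le z θ)
    have hC : (0:ℝ) ≤ (1 - r^2)/(2*π) := by
      apply div_nonneg _ (by positivity)
      nlinarith
    have hkey : poissonKer z θ
        = ((1 - r^2)/(2*π)) / (‖z - Complex.exp (θ * Complex.I)‖)^2 := by
      unfold poissonKer
      rw [← hrdef]
      ring
    rw [hkey, ← Real.sqrt_eq_rpow, Real.sqrt_div hC, Real.sqrt_sq hB0.le, ← hSdef,
      div_eq_mul_inv]
  set K := ∫ u in (0:ℝ)..π, (‖(r : ℂ) - Complex.exp (u * Complex.I)‖)⁻¹ with hKdef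
  have e2 : (∫ θ in (-π)..π, poissonKer z θ ^ ((1:ℝ)/2)) = S * (2 * K) := by
    calc (∫ θ in (-π)..π, poissonKer z θ ^ ((1:ℝ)/2))
        = ∫ θ in (-π)..π, S * (‖z - Complex.exp (θ * Complex.I)‖)⁻¹ :=
          intervalIntegral.integral_congr (fun θ _ => e1 θ)
      _ = S * ∫ θ in (-π)..π, (‖z - Complex.exp (θ * Complex.I)‖)⁻¹ :=
          intervalIntegral.integral_const_mul _ _
      _ = S * ∫ θ in (-π)..π,
            (‖(r : ℂ) - Complex.exp (((θ - Complex.arg z : ℝ)) * Complex.I)‖)⁻¹ := by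
          congr 1
          apply intervalIntegral.integral_congr
          intro θ _
          beta_reduce
          rw [pk_rotate z θ, ← hrdef]
      _ = S * ∫ u in (-π)..π, (‖(r : ℂ) - Complex.exp (u * Complex.I)‖)⁻¹ := by
          rw [pk_shift r (Complex.arg z)]
      _ = S * (2 * K) := by rw [pk_J_eq hr0 hz1, hKdef]
  have hK := pk_K_bounds hr0 hz1
  rw [← hKdef] at hK
  set L := Real.log (2 / (1 - r)) with hLdef
  have hL0 : (0:ℝ) ≤ L := by
    apply Real.log_nonneg
    rw [le_div_iff₀ hδ0]; linarith
  have hS0 : (0:ℝ) ≤ S := Real.sqrt_nonneg _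
  have hS_low : Real.sqrt (1 - r) / 3 ≤ S := by
    have h9 : (1 - r)/9 ≤ (1 - r^2)/(2*π) := by
      rw [div_le_div_iff₀ (by norm_num) (by positivity)]
      nlinarith [Real.pi_lt_d2, mul_nonneg hr0 hδ0.le]
    calc Real.sqrt (1 - r) / 3 = Real.sqrt ((1 - r)/9) := by
          rw [Real.sqrt_div hδ0.le,
            show Real.sqrt 9 = 3 by
              rw [show (9:ℝ) = 3^2 by norm_num, Real.sqrt_sq (by norm_num : (0:ℝ) ≤ 3)]]
      _ ≤ S := Real.sqrt_le_sqrt h9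
  have hS_up : S ≤ Real.sqrt (1 - r) := by
    apply Real.sqrt_le_sqrt
    rw [div_le_iff₀ (by positivity)]
    nlinarith [Real.pi_gt_three, mul_nonneg hr0 hδ0.le]
  have hrpow : (1 - r) ^ ((1:ℝ)/2) = Real.sqrt (1 - r) := (Real.sqrt_eq_rpow _).symm
  have hlogb : Real.logb 2 (2 / (1 - r)) = L / Real.log 2 := by rw [Real.logb, hLdef]
  rw [e2, hrpow, hlogb]
  constructor
  · have heq : Real.log 2 / 2 * Real.sqrt (1 - r) * (L / Real.log 2)
        = Real.sqrt (1 - r) * L / 2 := by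
      field_simp
    rw [heq]
    calc Real.sqrt (1 - r) * L / 2 ≤ Real.sqrt (1 - r) / 3 * (2 * L) := by
          nlinarith [Real.sqrt_nonneg (1 - r)]
      _ ≤ S * (2 * K) :=
          mul_le_mul hS_low (by linarith [hK.1]) (by linarith) hS0
  · have heq : 72 * Real.log 2 * Real.sqrt (1 - r) * (L / Real.log 2)
        = Real.sqrt (1 - r) * (2 * (36 * L)) := by
      field_simp
      ring
    rw [heq]
    exact mul_le_mul hS_up (by linarith [hK.1, hK.2]) (by linarith [hK.1]) (Real.sqrt_nonneg _)
end

section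
/- On the unit circle with the Euclidean metric and normalized Lebesgue measure (so γ = 1), the operator 𝒫₀f(x,t) = (log(2/t))^{-1} ∫ f(y)/(|x-y|+t) dμ(y) is comparable to the normalized convolution with the square root of the Poisson kernel: there are constants c₁, c₂ > 0 such that for all f ≥ 0 in L¹ and all z with 1/2 < |z| < 1, c₁ 𝒫₀f(θ, 1-|z|) ≤ (P₀1(z))^{-1} ∫_{-π}^{π} (p(z,φ))^{1/2} f(φ) dφ ≤ c₂ 𝒫₀f(θ, 1-|z|), where θ = z/|z| and P₀1(z) = ∫_{-π}^π (p(z,φ))^{1/2} dφ. -/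
open Real Complex MeasureTheory
open intervalIntegral

/-- The operator `𝒫₀f(θ,t)` on the unit circle, parametrized by the angle `θ`. -/
noncomputable def P0circ (f : ℝ → ℝ) (θ t : ℝ) : ℝ :=
  (Real.logb 2 (2 / t))⁻¹ *
    ∫ φ in (-Real.pi)..Real.pi,
      f φ / (‖Complex.exp (θ * Complex.I) - Complex.exp (φ * Complex.I)‖ + t)

-- chord length formula
lemma abs_one_sub_expI (ψ : ℝ) :
    ‖1 - Complex.exp (ψ * Complex.I)‖ = 2 * |Real.sin (ψ / 2)| := by
  rw [Complex.norm_def, Complex.normSq_apply]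
  have hre : (1 - Complex.exp (ψ * Complex.I)).re = 1 - Real.cos ψ := by
    simp [Complex.exp_ofReal_mul_I_re]
  have him : (1 - Complex.exp (ψ * Complex.I)).im = -Real.sin ψ := by
    simp [Complex.exp_ofReal_mul_I_im]
  rw [hre, him]
  have h1 : (1 - Real.cos ψ) * (1 - Real.cos ψ) + -Real.sin ψ * -Real.sin ψ
      = (2 * |Real.sin (ψ / 2)|) ^ 2 := by
    have h2 := Real.sin_sq_add_cos_sq ψ
    have h3 : Real.cos ψ = 2 * Real.cos (ψ/2) ^ 2 - 1 := by
      have := Real.cos_two_mul (ψ/2); rw [← this]; ring_nf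
    have h4 := Real.sin_sq_add_cos_sq (ψ/2)
    have h5 : |Real.sin (ψ/2)| ^ 2 = Real.sin (ψ/2) ^ 2 := sq_abs _
    nlinarith [h2, h3, h4, h5]
  rw [h1, Real.sqrt_sq (by positivity)]

lemma abs_expI (θ : ℝ) : ‖Complex.exp (θ * Complex.I)‖ = 1 := by
  rw [Complex.norm_exp]; simp

lemma chord_shift (θ ψ : ℝ) :
    ‖Complex.exp (θ * Complex.I) - Complex.exp ((θ + ψ) * Complex.I)‖
      = 2 * |Real.sin (ψ / 2)| := by
  have : Complex.exp (θ * Complex.I) - Complex.exp ((θ + ψ) * Complex.I)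
      = Complex.exp (θ * Complex.I) * (1 - Complex.exp (ψ * Complex.I)) := by
    rw [mul_sub, mul_one, ← Complex.exp_add]
    push_cast; ring_nf
  rw [this, norm_mul, abs_expI, one_mul, abs_one_sub_expI]


lemma integral_abs_add_inv (t : ℝ) (ht : 0 < t) :
    ∫ ψ in (-π)..π, (|ψ| + t)⁻¹ = 2 * (Real.log (π + t) - Real.log t) := by
  have hc : Continuous fun ψ : ℝ => (|ψ| + t)⁻¹ := by
    apply Continuous.inv₀ (by continuity)
    intro x; positivity
  have hpos : ∫ ψ in (0:ℝ)..π, (|ψ| + t)⁻¹ = Real.log (π + t) - Real.log t := by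
    have h1 : ∫ ψ in (0:ℝ)..π, (|ψ| + t)⁻¹ = ∫ ψ in (0:ℝ)..π, (ψ + t)⁻¹ := by
      apply integral_congr
      intro x hx
      rw [Set.uIcc_of_le (by positivity)] at hx
      simp only []; rw [_root_.abs_of_nonneg hx.1]
    have h2 : ∫ ψ in (0:ℝ)..π, (ψ + t)⁻¹ = ∫ x in (0+t)..(π+t), x⁻¹ := by
      exact integral_comp_add_right (fun x => x⁻¹) t
    rw [h1, h2, zero_add, integral_inv (by
      intro h
      rw [Set.mem_uIcc] at h
      rcases h with ⟨h, _⟩ | ⟨h, _⟩ <;> nlinarith [Real.pi_pos])]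
    rw [Real.log_div (by positivity) (by positivity)]
  have hneg : ∫ ψ in (-π)..(0:ℝ), (|ψ| + t)⁻¹ = Real.log (π + t) - Real.log t := by
    have h1 : ∫ ψ in (-π)..(0:ℝ), (|ψ| + t)⁻¹ = ∫ ψ in (-π)..(0:ℝ), (fun y => (|y| + t)⁻¹) (-ψ) := by
      apply integral_congr; intro x _; simp
    rw [h1, integral_comp_neg (fun y => (|y| + t)⁻¹), neg_zero, neg_neg, hpos]
  have := integral_add_adjacent_intervals
    (a := -π) (b := 0) (c := π) (f := fun ψ : ℝ => (|ψ| + t)⁻¹) (μ := volume)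
    (hc.intervalIntegrable _ _) (hc.intervalIntegrable _ _)
  rw [← this, hpos, hneg]; ring


lemma I_eq (θ t : ℝ) :
    ∫ φ in (-π)..π, (‖Complex.exp (θ * Complex.I) - Complex.exp (φ * Complex.I)‖ + t)⁻¹
      = ∫ ψ in (-π)..π, (2 * |Real.sin (ψ / 2)| + t)⁻¹ := by
  set g : ℝ → ℝ := fun φ =>
    (‖Complex.exp (θ * Complex.I) - Complex.exp (φ * Complex.I)‖ + t)⁻¹ with hg
  have hper : Function.Periodic g (2 * π) := by
    intro x
    have : Complex.exp ((↑(x + 2 * π)) * Complex.I) = Complex.exp (x * Complex.I) := by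
      push_cast
      rw [add_mul, Complex.exp_add, Complex.exp_two_pi_mul_I, mul_one]
    simp only [hg, this]
  have h1 : ∫ φ in (-π)..π, g φ = ∫ φ in (θ - π)..(θ + π), g φ := by
    have := hper.intervalIntegral_add_eq (θ - π) (-π)
    rw [show θ - π + 2 * π = θ + π by ring, show -π + 2 * π = π by ring] at this
    exact this.symm
  have h2 : ∫ φ in (θ - π)..(θ + π), g φ = ∫ ψ in (-π)..π, g (θ + ψ) := by
    rw [integral_comp_add_left g θ, show θ + -π = θ - π by ring]
  have h3 : ∀ ψ, g (θ + ψ) = (2 * |Real.sin (ψ / 2)| + t)⁻¹ := by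
    intro ψ; simp only [hg]; push_cast; rw [chord_shift]
  rw [h1, h2]; simp only [h3]

lemma I_bounds (θ t : ℝ) (ht0 : 0 < t) (ht1 : t < 1 / 2) :
    2 * Real.log 2 * Real.logb 2 (2 / t) ≤
      (∫ φ in (-π)..π,
        (‖Complex.exp (θ * Complex.I) - Complex.exp (φ * Complex.I)‖ + t)⁻¹) ∧
    (∫ φ in (-π)..π,
        (‖Complex.exp (θ * Complex.I) - Complex.exp (φ * Complex.I)‖ + t)⁻¹)
      ≤ 2 * π * Real.log 2 * Real.logb 2 (2 / t) := by
  have hpi := Real.pi_pos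
  rw [I_eq θ t]
  have hc1 : Continuous fun ψ : ℝ => (2 * |Real.sin (ψ / 2)| + t)⁻¹ := by
    apply Continuous.inv₀ (by continuity); intro x; positivity
  have hc2 : Continuous fun ψ : ℝ => (|ψ| + t)⁻¹ := by
    apply Continuous.inv₀ (by continuity); intro x; positivity
  have hc3 : Continuous fun ψ : ℝ => (π / 2) * (|ψ| + t)⁻¹ := continuous_const.mul hc2
  have hlow : ∀ ψ ∈ Set.Icc (-π) π, (|ψ| + t)⁻¹ ≤ (2 * |Real.sin (ψ / 2)| + t)⁻¹ := by
    intro ψ _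
    apply inv_anti₀ (by positivity)
    have h1 : |Real.sin (ψ / 2)| ≤ |ψ / 2| := Real.abs_sin_le_abs
    have h2 : |ψ / 2| = |ψ| / 2 := by rw [abs_div]; norm_num
    nlinarith [h1, h2]
  have hupp : ∀ ψ ∈ Set.Icc (-π) π,
      (2 * |Real.sin (ψ / 2)| + t)⁻¹ ≤ (π / 2) * (|ψ| + t)⁻¹ := by
    intro ψ hψ
    have hs : 2 / π * (|ψ| / 2) ≤ Real.sin (|ψ| / 2) := by
      apply Real.mul_le_sin (by positivity)
      rcases hψ with ⟨h1, h2⟩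
      rw [div_le_div_iff₀ (by norm_num) (by norm_num : (0:ℝ) < 2)]
      rcases abs_cases ψ with ⟨h, _⟩ | ⟨h, _⟩ <;> nlinarith
    have habs : |Real.sin (ψ / 2)| = Real.sin (|ψ| / 2) := by
      rcases abs_cases ψ with ⟨h, h0⟩ | ⟨h, h0⟩
      · rw [h, _root_.abs_of_nonneg]
        apply Real.sin_nonneg_of_nonneg_of_le_pi (by linarith) (by
          rcases hψ with ⟨_, h2⟩; linarith)
      · rcases hψ with ⟨h1, _⟩
        have heq : Real.sin (|ψ| / 2) = Real.sin (-ψ / 2) := by rw [h]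
        rw [heq, ← abs_neg (Real.sin (ψ / 2)), ← Real.sin_neg, ← neg_div]
        exact _root_.abs_of_nonneg (Real.sin_nonneg_of_nonneg_of_le_pi
          (by linarith) (by linarith))
    have key : 2 / π * (|ψ| + t) ≤ 2 * |Real.sin (ψ / 2)| + t := by
      rw [habs]
      have h2 : 2 / π * |ψ| ≤ 2 * Real.sin (|ψ| / 2) := by nlinarith [hs]
      have h3 : (2 / π) * t ≤ t := by
        rw [div_mul_eq_mul_div, div_le_iff₀ hpi]
        nlinarith [Real.two_le_pi, ht0.le]
      nlinarith [h2, h3]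
    calc (2 * |Real.sin (ψ / 2)| + t)⁻¹ ≤ (2 / π * (|ψ| + t))⁻¹ :=
          inv_anti₀ (by positivity) key
      _ = (π / 2) * (|ψ| + t)⁻¹ := by
          rw [mul_inv, inv_div]
  have hinta : IntervalIntegrable (fun ψ : ℝ => (|ψ| + t)⁻¹) volume (-π) π :=
    hc2.intervalIntegrable _ _
  have hintb : IntervalIntegrable (fun ψ : ℝ => (2 * |Real.sin (ψ / 2)| + t)⁻¹) volume (-π) π :=
    hc1.intervalIntegrable _ _
  have hlowint := integral_mono_on (by linarith : -π ≤ π) hinta hintb hlow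
  have huppint := integral_mono_on (by linarith : -π ≤ π) hintb
    (hc3.intervalIntegrable _ _) hupp
  rw [integral_abs_add_inv t ht0] at hlowint
  rw [show (∫ ψ in (-π)..π, π / 2 * (|ψ| + t)⁻¹) = (π / 2) * ∫ ψ in (-π)..π, (|ψ| + t)⁻¹ from
    intervalIntegral.integral_const_mul _ _, integral_abs_add_inv t ht0] at huppint
  -- compare A := log(π+t) - log t with log 2 * logb 2 (2/t) = log 2 - log t
  have hL : Real.log 2 * Real.logb 2 (2 / t) = Real.log 2 - Real.log t := by
    rw [Real.logb, mul_div_cancel₀ _ (by positivity : Real.log 2 ≠ 0)]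
    exact Real.log_div (by norm_num) (ne_of_gt ht0)
  have hA1 : Real.log 2 - Real.log t ≤ Real.log (π + t) - Real.log t := by
    have h2pi : (2:ℝ) ≤ π + t := by nlinarith [Real.two_le_pi]
    have := Real.log_le_log (x := 2) (by norm_num) h2pi
    linarith
  have hA2 : Real.log (π + t) - Real.log t ≤ 2 * (Real.log 2 - Real.log t) := by
    have h1 : Real.log (π + t) + Real.log t = Real.log ((π + t) * t) :=
      (Real.log_mul (by positivity) (ne_of_gt ht0)).symm
    have h2 : Real.log ((π + t) * t) ≤ Real.log 4 := by
      apply Real.log_le_log (by positivity)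
      nlinarith [Real.pi_le_four]
    have h3 : Real.log 4 = 2 * Real.log 2 := by
      rw [show (4:ℝ) = 2 ^ 2 by norm_num, Real.log_pow]; push_cast; ring
    linarith
  constructor
  · nlinarith [hlowint, hA1, hL]
  · nlinarith [huppint, hA2, hL, hpi, Real.log_pos (by norm_num : (1:ℝ) < 2),
      Real.log_nonneg (by norm_num : (1:ℝ) ≤ 2)]

/-- On the unit circle the normalized convolution with the square root of the Poisson
kernel is comparable with `𝒫₀f(θ, 1-|z|)`, where `θ = arg z`. -/
theorem P0_comparable_to_sqrt_poisson :
    ∃ c₁ c₂ : ℝ, 0 < c₁ ∧ 0 < c₂ ∧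
      ∀ f : ℝ → ℝ, (∀ φ, 0 ≤ f φ) →
        IntervalIntegrable f MeasureTheory.volume (-Real.pi) Real.pi →
        ∀ z : ℂ, 1 / 2 < ‖z‖ → ‖z‖ < 1 →
          c₁ * P0circ f (Complex.arg z) (1 - ‖z‖) ≤
            (∫ φ in (-Real.pi)..Real.pi, (poissonKer z φ) ^ ((1 : ℝ) / 2))⁻¹ *
              ∫ φ in (-Real.pi)..Real.pi, (poissonKer z φ) ^ ((1 : ℝ) / 2) * f φ ∧
          (∫ φ in (-Real.pi)..Real.pi, (poissonKer z φ) ^ ((1 : ℝ) / 2))⁻¹ *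
              (∫ φ in (-Real.pi)..Real.pi, (poissonKer z φ) ^ ((1 : ℝ) / 2) * f φ) ≤
            c₂ * P0circ f (Complex.arg z) (1 - ‖z‖) := by
  have hlog2 : 0 < Real.log 2 := Real.log_pos (by norm_num)
  have hpi := Real.pi_pos
  refine ⟨1 / (6 * π * Real.log 2), 3 / (2 * Real.log 2), by positivity, by positivity,
    fun f hf hfint z hz1 hz2 => ?_⟩
  set c₁ : ℝ := 1 / (6 * π * Real.log 2) with hc₁def
  set c₂ : ℝ := 3 / (2 * Real.log 2) with hc₂def
  set r : ℝ := ‖z‖ with hrdef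
  set t : ℝ := 1 - r with htdef
  set θ : ℝ := Complex.arg z with hθdef
  have ht0 : 0 < t := by simp only [htdef]; linarith
  have ht1 : t < 1 / 2 := by simp only [htdef]; linarith
  have hr0 : 0 < r := by linarith
  -- basic geometry
  set d : ℝ → ℝ := fun φ =>
    ‖Complex.exp (θ * Complex.I) - Complex.exp (φ * Complex.I)‖ with hddef
  set D : ℝ → ℝ := fun φ => ‖z - Complex.exp (φ * Complex.I)‖ with hDdef
  have hzeq : (↑r : ℂ) * Complex.exp (↑θ * Complex.I) = z := Complex.norm_mul_exp_arg_mul_I z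
  have hDθ : ‖z - Complex.exp (↑θ * Complex.I)‖ = t := by
    conv_lhs => rw [← hzeq]
    rw [show (↑r : ℂ) * Complex.exp (↑θ * Complex.I) - Complex.exp (↑θ * Complex.I)
        = (((r - 1 : ℝ)) : ℂ) * Complex.exp (↑θ * Complex.I) by push_cast; ring,
      norm_mul, abs_expI, mul_one, Complex.norm_real, Real.norm_eq_abs, abs_of_nonpos (by linarith)]
    simp [htdef]
  have ht_le_D : ∀ φ, t ≤ D φ := by
    intro φ
    have h1 : ‖Complex.exp (↑φ * Complex.I)‖ - ‖z‖ ≤ ‖Complex.exp (↑φ * Complex.I) - z‖ :=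
      norm_sub_norm_le _ _
    rw [norm_sub_rev] at h1
    have h2 : ‖Complex.exp (↑φ * Complex.I)‖ = 1 := abs_expI φ
    have h3 : ‖z‖ = r := rfl
    simpa [hDdef, h2, h3, htdef] using h1
  have hD_pos : ∀ φ, 0 < D φ := fun φ => lt_of_lt_of_le ht0 (ht_le_D φ)
  have hub : ∀ φ, D φ ≤ d φ + t := by
    intro φ
    have := norm_sub_le_norm_sub_add_norm_sub z
      (Complex.exp (↑θ * Complex.I)) (Complex.exp (↑φ * Complex.I))
    rw [hDθ] at this
    simp only [hDdef, hddef]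
    linarith
  have hlb : ∀ φ, d φ + t ≤ 3 * D φ := by
    intro φ
    have h1 := norm_sub_le_norm_sub_add_norm_sub
      (Complex.exp (↑θ * Complex.I)) z (Complex.exp (↑φ * Complex.I))
    have h2 : ‖Complex.exp (↑θ * Complex.I) - z‖ = t := by
      rw [norm_sub_rev, hDθ]
    rw [h2] at h1
    have h3 := ht_le_D φ
    simp only [hDdef, hddef] at *
    linarith
  -- square root of Poisson kernel
  set s : ℝ := Real.sqrt ((1 - r ^ 2) / (2 * π)) with hsdef
  have hr2 : 0 < 1 - r ^ 2 := by nlinarith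
  have hs : 0 < s := Real.sqrt_pos.mpr (by positivity)
  have hsq : ∀ φ, (poissonKer z φ) ^ ((1 : ℝ) / 2) = s / D φ := by
    intro φ
    rw [← Real.sqrt_eq_rpow]
    have h1 : poissonKer z φ = ((1 - r ^ 2) / (2 * π)) / (D φ) ^ 2 := by
      simp only [poissonKer, hDdef, ← hrdef]
      ring
    rw [h1, Real.sqrt_div (by positivity), Real.sqrt_sq (hD_pos φ).le, hsdef]
  -- kernel pointwise bounds
  have hk_low : ∀ φ, s * (d φ + t)⁻¹ ≤ s / D φ := by
    intro φ
    rw [← div_eq_mul_inv]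
    exact div_le_div_of_nonneg_left hs.le (hD_pos φ) (hub φ)
  have hk_upp : ∀ φ, s / D φ ≤ 3 * (s * (d φ + t)⁻¹) := by
    intro φ
    rw [← div_eq_mul_inv, mul_div_assoc']
    rw [div_le_div_iff₀ (hD_pos φ) (by positivity)]
    nlinarith [hlb φ, hs.le, hD_pos φ]
  -- continuity and integrability
  have hcontD : Continuous D := by
    apply continuous_norm.comp
    exact continuous_const.sub
      (Complex.continuous_exp.comp (Complex.continuous_ofReal.mul continuous_const))
  have hcontd : Continuous d := by
    apply continuous_norm.comp
    exact continuous_const.sub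
      (Complex.continuous_exp.comp (Complex.continuous_ofReal.mul continuous_const))
  have hcont_k : Continuous fun φ => s / D φ :=
    continuous_const.div hcontD fun φ => (hD_pos φ).ne'
  have hcont_g : Continuous fun φ => (d φ + t)⁻¹ := by
    apply Continuous.inv₀ (by fun_prop)
    intro φ; have := (hddef ▸ norm_nonneg _ : (0:ℝ) ≤ d φ); positivity
  set L : ℝ := Real.logb 2 (2 / t) with hLdef
  have hL0 : 0 < L := Real.logb_pos (by norm_num) (by rw [lt_div_iff₀ ht0]; linarith)
  have hIbd : 2 * Real.log 2 * L ≤ (∫ φ in (-π)..π, (d φ + t)⁻¹) ∧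
      (∫ φ in (-π)..π, (d φ + t)⁻¹) ≤ 2 * π * Real.log 2 * L := by
    simp only [hddef, hLdef]
    exact I_bounds θ t ht0 ht1
  set I : ℝ := ∫ φ in (-π)..π, (d φ + t)⁻¹ with hIdef
  obtain ⟨hI_low, hI_upp⟩ := hIbd
  set Jf : ℝ := ∫ φ in (-π)..π, f φ / (d φ + t) with hJfdef
  set Sf : ℝ := ∫ φ in (-π)..π, s / D φ * f φ with hSfdef
  set S : ℝ := ∫ φ in (-π)..π, s / D φ with hSdef
  have hint_g : IntervalIntegrable (fun φ => (d φ + t)⁻¹) volume (-π) π :=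
    hcont_g.intervalIntegrable _ _
  have hint_gf : IntervalIntegrable (fun φ => f φ * (d φ + t)⁻¹) volume (-π) π :=
    hfint.mul_continuousOn hcont_g.continuousOn
  have hint_kf : IntervalIntegrable (fun φ => s / D φ * f φ) volume (-π) π :=
    hfint.continuousOn_mul hcont_k.continuousOn
  have hJf_eq : Jf = ∫ φ in (-π)..π, f φ * (d φ + t)⁻¹ := by
    simp only [hJfdef, div_eq_mul_inv]
  have hJf_nonneg : 0 ≤ Jf := by
    rw [hJf_eq]
    apply intervalIntegral.integral_nonneg (by linarith)
    intro φ _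
    have : (0:ℝ) ≤ (d φ + t)⁻¹ := by
      have := (hddef ▸ norm_nonneg _ : (0:ℝ) ≤ d φ); positivity
    exact mul_nonneg (hf φ) this
  -- integral bounds
  have hSf_low : s * Jf ≤ Sf := by
    rw [hJf_eq, ← intervalIntegral.integral_const_mul]
    apply integral_mono_on (by linarith) (hint_gf.const_mul s) hint_kf
    intro φ _
    have h1 := mul_le_mul_of_nonneg_right (hk_low φ) (hf φ)
    calc s * (f φ * (d φ + t)⁻¹) = s * (d φ + t)⁻¹ * f φ := by ring
      _ ≤ s / D φ * f φ := h1
  have hSf_upp : Sf ≤ 3 * s * Jf := by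
    rw [hJf_eq, show 3 * s * ∫ φ in (-π)..π, f φ * (d φ + t)⁻¹
        = ∫ φ in (-π)..π, 3 * s * (f φ * (d φ + t)⁻¹) from (intervalIntegral.integral_const_mul _ _).symm]
    apply integral_mono_on (by linarith) hint_kf (hint_gf.const_mul (3 * s))
    intro φ _
    have h1 := mul_le_mul_of_nonneg_right (hk_upp φ) (hf φ)
    calc s / D φ * f φ ≤ 3 * (s * (d φ + t)⁻¹) * f φ := h1
      _ = 3 * s * (f φ * (d φ + t)⁻¹) := by ring
  have hS_low : s * I ≤ S := by
    rw [hIdef, ← intervalIntegral.integral_const_mul]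
    apply integral_mono_on (by linarith) (hint_g.const_mul s)
      (hcont_k.intervalIntegrable _ _)
    intro φ _; exact hk_low φ
  have hS_upp : S ≤ 3 * s * I := by
    rw [hIdef, show 3 * s * ∫ φ in (-π)..π, (d φ + t)⁻¹
        = ∫ φ in (-π)..π, 3 * s * (d φ + t)⁻¹ from (intervalIntegral.integral_const_mul _ _).symm]
    apply integral_mono_on (by linarith) (hcont_k.intervalIntegrable _ _)
      (hint_g.const_mul (3 * s))
    intro φ _
    calc s / D φ ≤ 3 * (s * (d φ + t)⁻¹) := hk_upp φ
      _ = 3 * s * (d φ + t)⁻¹ := by ring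
  have hI_pos : 0 < I := by
    nlinarith [hI_low, mul_pos (mul_pos (by norm_num : (0:ℝ) < 2) hlog2) hL0]
  have hS_pos : 0 < S := lt_of_lt_of_le (mul_pos hs hI_pos) hS_low
  -- rewrite the goal
  have hP0 : P0circ f θ t = L⁻¹ * Jf := by
    simp only [P0circ, hLdef, hJfdef, hddef]
  have hgoal_Sf : (∫ φ in (-π)..π, (poissonKer z φ) ^ ((1 : ℝ) / 2) * f φ) = Sf := by
    rw [hSfdef]; apply integral_congr; intro φ _; simp only [hsq φ]
  have hgoal_S : (∫ φ in (-π)..π, (poissonKer z φ) ^ ((1 : ℝ) / 2)) = S := by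
    rw [hSdef]; apply integral_congr; intro φ _; simp only [hsq φ]
  rw [hgoal_Sf, hgoal_S, hP0]
  have hs3 : (0:ℝ) ≤ 3 * s := by positivity
  clear_value c₁ c₂ d D I Jf Sf S L
  constructor
  · have h1 : c₁ * (L⁻¹ * Jf) = c₁ * Jf / L := by ring
    have h2 : S⁻¹ * Sf = Sf / S := by ring
    rw [h1, h2, div_le_div_iff₀ hL0 hS_pos]
    have hSb : S ≤ 3 * s * (2 * π * Real.log 2 * L) := by
      refine le_trans hS_upp ?_
      rw [mul_assoc, mul_assoc]
      exact mul_le_mul_of_nonneg_left (by exact mul_le_mul_of_nonneg_left hI_upp hs.le)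
        (by norm_num)
    have hc : c₁ * (3 * (2 * π * Real.log 2)) = 1 := by
      rw [hc₁def]; field_simp; ring
    calc c₁ * Jf * S ≤ c₁ * Jf * (3 * s * (2 * π * Real.log 2 * L)) := by
          apply mul_le_mul_of_nonneg_left hSb
            (mul_nonneg (le_of_lt (by rw [hc₁def]; positivity)) hJf_nonneg)
      _ = s * Jf * L * (c₁ * (3 * (2 * π * Real.log 2))) := by ring
      _ = s * Jf * L := by rw [hc, mul_one]
      _ ≤ Sf * L := mul_le_mul_of_nonneg_right hSf_low hL0.le
  · have h1 : c₂ * (L⁻¹ * Jf) = c₂ * Jf / L := by ring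
    have h2 : S⁻¹ * Sf = Sf / S := by ring
    rw [h1, h2, div_le_div_iff₀ hS_pos hL0]
    have hSb : s * (2 * Real.log 2 * L) ≤ S :=
      le_trans (mul_le_mul_of_nonneg_left hI_low hs.le) hS_low
    have hc : c₂ * (2 * Real.log 2) = 3 := by
      rw [hc₂def]; field_simp
    calc Sf * L ≤ 3 * s * Jf * L := mul_le_mul_of_nonneg_right hSf_upp hL0.le
      _ = c₂ * Jf * (s * (2 * Real.log 2 * L)) := by rw [← hc]; ring
      _ ≤ c₂ * Jf * S := by
          apply mul_le_mul_of_nonneg_left hSb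
            (mul_nonneg (le_of_lt (by rw [hc₂def]; positivity)) hJf_nonneg)
end
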